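/- Consider a finite discounted MDP with state set S, action set A, kernel P, reward r, and discount γ ∈ [0,1), together with a regularizer φ satisfying Assumption 2 and λ ≥ 0. Then the regularized Bellman operator T_λ has a unique fixed point V*_λ : S → ℝ (i.e., T_λ V*_λ = V*_λ), and for every initial value function V₀ : S → ℝ and every n ∈ ℕ, ‖T_λⁿ V₀ − V*_λ‖_∞ ≤ γⁿ · ‖V₀ − V*_λ‖_∞; in particular the iterates T_λⁿ V₀ converge to V*_λ in supremum norm. -/

import Mathlib

open Filter

/-- A regularizer: on the interval (0,1], φ is nonincreasing, φ(1) = 0,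
φ is differentiable, and `x ↦ x·φ(x)` is strictly concave. -/
def IsRegularizer (φ : ℝ → ℝ) : Prop :=
  AntitoneOn φ (Set.Ioc 0 1) ∧ φ 1 = 0 ∧ DifferentiableOn ℝ φ (Set.Ioc 0 1) ∧
    StrictConcaveOn ℝ (Set.Ioc 0 1) (fun x => x * φ x)

/-- Assumption 2: `x·φ(x) → 0` as `x → 0⁺`. -/
def Assumption2 (φ : ℝ → ℝ) : Prop :=
  Tendsto (fun x => x * φ x) (nhdsWithin 0 (Set.Ioi 0)) (nhds 0)

/-- The regularized Bellman operator `T_λ`: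
`(T_λ V) s = sup_{p ∈ Δ_A} ∑ a, (p a * (r s a + γ ∑ s', P s a s' * V s') + λ * f_φ(p a))`,
where `f_φ(x) = x * φ x` (so `f_φ(0) = 0` automatically). -/
noncomputable def Treg {S A : Type*} [Fintype S] [Fintype A]
    (P : S → A → S → ℝ) (r : S → A → ℝ) (γ : ℝ) (φ : ℝ → ℝ) (lam : ℝ)
    (V : S → ℝ) (s : S) : ℝ :=
  sSup ((fun p : A → ℝ =>
      ∑ a, (p a * (r s a + γ * ∑ s', P s a s' * V s') + lam * (p a * φ (p a)))) ''
    {p | (∀ a, 0 ≤ p a) ∧ ∑ a, p a = 1})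

/-- The sup over a finite nonempty index type of `|f s - g s|` is the sup-norm distance. -/
private lemma iSup_abs_sub_eq_dist {S : Type*} [Fintype S] [Nonempty S] (f g : S → ℝ) :
    (⨆ s, |f s - g s|) = dist f g := by
  have bdd : BddAbove (Set.range fun s => |f s - g s|) :=
    Set.Finite.bddAbove (Set.finite_range _)
  apply le_antisymm
  · exact ciSup_le fun s => by rw [← Real.dist_eq]; exact dist_le_pi_dist f g s
  · have h0 : (0:ℝ) ≤ ⨆ s, |f s - g s| :=
      le_trans (abs_nonneg _) (le_ciSup bdd (Classical.arbitrary S))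
    exact (dist_pi_le_iff h0).mpr fun s => by
      rw [Real.dist_eq]; exact le_ciSup bdd s

/-- Under Assumption 2 and monotonicity, `x·φ(x)` is bounded above on `[0,1]`. -/
private lemma regularizer_bound (φ : ℝ → ℝ) (hmono : AntitoneOn φ (Set.Ioc 0 1))
    (hφ1 : φ 1 = 0) (hA2 : Assumption2 φ) :
    ∃ M : ℝ, 0 ≤ M ∧ ∀ x ∈ Set.Icc (0:ℝ) 1, x * φ x ≤ M := by
  obtain ⟨δ, hδ0, hδ⟩ := (Metric.tendsto_nhdsWithin_nhds.mp hA2) 1 one_pos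
  set d : ℝ := min δ 1 with hd
  have hd0 : 0 < d := lt_min hδ0 one_pos
  have hd1 : d ≤ 1 := min_le_right _ _
  have hφd : 0 ≤ φ d := by
    have := hmono ⟨hd0, hd1⟩ ⟨one_pos, le_refl 1⟩ hd1
    linarith [hφ1 ▸ this]
  refine ⟨max 1 (φ d), le_trans zero_le_one (le_max_left _ _), ?_⟩
  rintro x ⟨hx0, hx1⟩
  rcases eq_or_lt_of_le hx0 with h | h
  · rw [← h, zero_mul]; exact le_trans zero_le_one (le_max_left _ _)
  rcases lt_or_ge x d with hxd | hxd
  · have := hδ h (by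
      rw [Real.dist_eq, sub_zero, abs_of_pos h]
      exact lt_of_lt_of_le hxd (min_le_left _ _))
    rw [Real.dist_eq, sub_zero] at this
    exact le_trans (le_of_lt (lt_of_abs_lt this)) (le_max_left _ _)
  · have hφx : φ x ≤ φ d := hmono ⟨hd0, hd1⟩ ⟨h, hx1⟩ hxd
    calc x * φ x ≤ x * φ d := mul_le_mul_of_nonneg_left hφx hx0
    _ ≤ 1 * φ d := mul_le_mul_of_nonneg_right hx1 hφd
    _ ≤ max 1 (φ d) := by rw [one_mul]; exact le_max_right _ _

section Aux

variable {S A : Type*} [Fintype S] [Fintype A] [Nonempty S] [Nonempty A]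

/-- The objective set in the definition of `Treg` is nonempty. -/
private lemma treg_set_nonempty (F : (A → ℝ) → ℝ) :
    (F '' {p : A → ℝ | (∀ a, 0 ≤ p a) ∧ ∑ a, p a = 1}).Nonempty := by
  refine ⟨F (fun _ => (Fintype.card A : ℝ)⁻¹), ⟨_, ⟨fun a => by positivity, ?_⟩, rfl⟩⟩
  rw [Finset.sum_const, Finset.card_univ, nsmul_eq_mul]
  have : (Fintype.card A : ℝ) ≠ 0 := by
    exact_mod_cast Fintype.card_ne_zero
  field_simp

/-- The objective set is bounded above. -/
private lemma treg_set_bddAbove (c : A → ℝ) (φ : ℝ → ℝ) (lam : ℝ) (hlam : 0 ≤ lam)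
    (M : ℝ) (hM : ∀ x ∈ Set.Icc (0:ℝ) 1, x * φ x ≤ M) :
    BddAbove ((fun p : A → ℝ => ∑ a, (p a * c a + lam * (p a * φ (p a)))) ''
      {p | (∀ a, 0 ≤ p a) ∧ ∑ a, p a = 1}) := by
  refine ⟨∑ a, (|c a| + lam * M), ?_⟩
  rintro x ⟨p, ⟨hp, hsum⟩, rfl⟩
  have hp1 : ∀ a, p a ≤ 1 := fun a => by
    calc p a ≤ ∑ b, p b := Finset.single_le_sum (fun b _ => hp b) (Finset.mem_univ a)
    _ = 1 := hsum
  refine Finset.sum_le_sum fun a _ => ?_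
  have h1 : p a * c a ≤ |c a| := by
    calc p a * c a ≤ |p a * c a| := le_abs_self _
    _ = p a * |c a| := by rw [abs_mul, abs_of_nonneg (hp a)]
    _ ≤ 1 * |c a| := mul_le_mul_of_nonneg_right (hp1 a) (abs_nonneg _)
    _ = |c a| := one_mul _
  have h2 : lam * (p a * φ (p a)) ≤ lam * M :=
    mul_le_mul_of_nonneg_left (hM (p a) ⟨hp a, hp1 a⟩) hlam
  linarith

/-- One-sided contraction estimate for `Treg`. -/
private lemma Treg_le_add (P : S → A → S → ℝ) (hP : ∀ s a s', 0 ≤ P s a s')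
    (hPsum : ∀ s a, ∑ s', P s a s' = 1)
    (r : S → A → ℝ) (γ : ℝ) (hγ0 : 0 ≤ γ)
    (φ : ℝ → ℝ) (lam : ℝ) (hlam : 0 ≤ lam)
    (M : ℝ) (hM : ∀ x ∈ Set.Icc (0:ℝ) 1, x * φ x ≤ M)
    (V W : S → ℝ) (s : S) :
    Treg P r γ φ lam V s ≤ Treg P r γ φ lam W s + γ * dist V W := by
  have bddW := treg_set_bddAbove (fun a => r s a + γ * ∑ s', P s a s' * W s') φ lam hlam M hM
  have hne := treg_set_nonempty (A := A) (fun p : A → ℝ =>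
    ∑ a, (p a * (r s a + γ * ∑ s', P s a s' * V s') + lam * (p a * φ (p a))))
  refine csSup_le hne ?_
  rintro x ⟨p, ⟨hp, hsum⟩, rfl⟩
  have key : (∑ a, (p a * (r s a + γ * ∑ s', P s a s' * V s') + lam * (p a * φ (p a))))
      ≤ (∑ a, (p a * (r s a + γ * ∑ s', P s a s' * W s') + lam * (p a * φ (p a))))
        + γ * dist V W := by
    have hterm : ∀ a, p a * (r s a + γ * ∑ s', P s a s' * V s')
        ≤ p a * (r s a + γ * ∑ s', P s a s' * W s') + p a * (γ * dist V W) := by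
      intro a
      have h1 : ∑ s', P s a s' * V s' ≤ (∑ s', P s a s' * W s') + dist V W := by
        have hb : ∀ s', P s a s' * V s' ≤ P s a s' * W s' + P s a s' * dist V W := by
          intro s'
          have hd : V s' - W s' ≤ dist V W :=
            le_trans (le_abs_self _) (by rw [← Real.dist_eq]; exact dist_le_pi_dist V W s')
          nlinarith [hP s a s']
        calc ∑ s', P s a s' * V s'
            ≤ ∑ s', (P s a s' * W s' + P s a s' * dist V W) :=
              Finset.sum_le_sum fun s' _ => hb s'
          _ = (∑ s', P s a s' * W s') + (∑ s', P s a s') * dist V W := by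
              rw [Finset.sum_add_distrib, Finset.sum_mul]
          _ = (∑ s', P s a s' * W s') + dist V W := by rw [hPsum s a, one_mul]
      have h2 := mul_le_mul_of_nonneg_left h1 hγ0
      nlinarith [mul_le_mul_of_nonneg_left h2 (hp a)]
    calc (∑ a, (p a * (r s a + γ * ∑ s', P s a s' * V s') + lam * (p a * φ (p a))))
        ≤ ∑ a, (p a * (r s a + γ * ∑ s', P s a s' * W s') + lam * (p a * φ (p a))
            + p a * (γ * dist V W)) :=
          Finset.sum_le_sum fun a _ => by linarith [hterm a]
      _ = (∑ a, (p a * (r s a + γ * ∑ s', P s a s' * W s') + lam * (p a * φ (p a))))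
            + (∑ a, p a) * (γ * dist V W) := by
          rw [Finset.sum_add_distrib, Finset.sum_mul]
      _ = _ := by rw [hsum, one_mul]
  refine le_trans key ?_
  have : (∑ a, (p a * (r s a + γ * ∑ s', P s a s' * W s') + lam * (p a * φ (p a))))
      ≤ Treg P r γ φ lam W s :=
    le_csSup bddW ⟨p, ⟨hp, hsum⟩, rfl⟩
  linarith

end Aux

/-- The regularized Bellman operator `T_λ` has a unique fixed point `V*_λ`, the
iterates satisfy `‖T_λⁿ V₀ − V*_λ‖_∞ ≤ γⁿ·‖V₀ − V*_λ‖_∞`, and in particular the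
iterates converge to `V*_λ` in supremum norm. -/
theorem Treg_fixed_point (S A : Type*) [Fintype S] [Fintype A] [Nonempty S] [Nonempty A]
    (P : S → A → S → ℝ) (hP : ∀ s a s', 0 ≤ P s a s')
    (hPsum : ∀ s a, ∑ s', P s a s' = 1)
    (r : S → A → ℝ) (γ : ℝ) (hγ0 : 0 ≤ γ) (hγ1 : γ < 1)
    (φ : ℝ → ℝ) (hφ : IsRegularizer φ) (hA2 : Assumption2 φ)
    (lam : ℝ) (hlam : 0 ≤ lam) :
    (∃! Vstar : S → ℝ, Treg P r γ φ lam Vstar = Vstar) ∧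
      ∀ Vstar : S → ℝ, Treg P r γ φ lam Vstar = Vstar →
        ∀ V₀ : S → ℝ,
          (∀ n : ℕ, (⨆ s, |(Treg P r γ φ lam)^[n] V₀ s - Vstar s|) ≤
              γ ^ n * ⨆ s, |V₀ s - Vstar s|) ∧
          Tendsto (fun n : ℕ => ⨆ s, |(Treg P r γ φ lam)^[n] V₀ s - Vstar s|)
            atTop (nhds 0) := by
  obtain ⟨M, hM0, hM⟩ := regularizer_bound φ hφ.1 hφ.2.1 hA2
  set T : (S → ℝ) → (S → ℝ) := Treg P r γ φ lam with hT
  -- the Lipschitz estimate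
  have hlip : ∀ V W : S → ℝ, dist (T V) (T W) ≤ γ * dist V W := by
    intro V W
    refine (dist_pi_le_iff (by positivity)).mpr fun s => ?_
    rw [Real.dist_eq, abs_sub_le_iff]
    constructor
    · have := Treg_le_add P hP hPsum r γ hγ0 φ lam hlam M hM V W s
      linarith
    · have := Treg_le_add P hP hPsum r γ hγ0 φ lam hlam M hM W V s
      rw [dist_comm] at this
      linarith
  have hcontr : ContractingWith ⟨γ, hγ0⟩ T := by
    refine ⟨?_, LipschitzWith.of_dist_le_mul fun V W => hlip V W⟩
    exact (NNReal.coe_lt_one (r := ⟨γ, hγ0⟩)).mp hγ1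
  -- iterate bound, for any fixed point
  have hiter : ∀ Vstar : S → ℝ, T Vstar = Vstar → ∀ (V₀ : S → ℝ) (n : ℕ),
      dist (T^[n] V₀) Vstar ≤ γ ^ n * dist V₀ Vstar := by
    intro Vstar hVstar V₀ n
    induction n with
    | zero => simp
    | succ n ih =>
        rw [Function.iterate_succ_apply']
        calc dist (T (T^[n] V₀)) Vstar = dist (T (T^[n] V₀)) (T Vstar) := by rw [hVstar]
        _ ≤ γ * dist (T^[n] V₀) Vstar := hlip _ _
        _ ≤ γ * (γ ^ n * dist V₀ Vstar) := mul_le_mul_of_nonneg_left ih hγ0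
        _ = γ ^ (n + 1) * dist V₀ Vstar := by ring
  constructor
  · -- existence and uniqueness
    refine ⟨ContractingWith.fixedPoint T hcontr, hcontr.fixedPoint_isFixedPt, ?_⟩
    intro y hy
    exact hcontr.fixedPoint_unique hy
  · intro Vstar hVstar V₀
    have hbound : ∀ n : ℕ, (⨆ s, |T^[n] V₀ s - Vstar s|) ≤ γ ^ n * ⨆ s, |V₀ s - Vstar s| := by
      intro n
      rw [iSup_abs_sub_eq_dist (T^[n] V₀) Vstar, iSup_abs_sub_eq_dist V₀ Vstar]
      exact hiter Vstar hVstar V₀ n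
    refine ⟨hbound, ?_⟩
    have hnonneg : ∀ n : ℕ, 0 ≤ ⨆ s, |T^[n] V₀ s - Vstar s| := by
      intro n
      rw [iSup_abs_sub_eq_dist]
      exact dist_nonneg
    have hlim : Tendsto (fun n : ℕ => γ ^ n * ⨆ s, |V₀ s - Vstar s|) atTop (nhds 0) := by
      have := (tendsto_pow_atTop_nhds_zero_of_lt_one hγ0 hγ1).mul_const
        (⨆ s, |V₀ s - Vstar s|)
      simpa using this
    exact squeeze_zero hnonneg hbound hlim
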